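/- Let G be a finite, transitive, in-degree d-regular directed graph containing a loop e at a vertex v. Then G admits a strong edge colouring with d colours and a synchronizing word: colour the loop e and all edges of a directed spanning tree rooted at v with colour 1, extend arbitrarily to a strong edge colouring, and then the word 1^k is synchronizing for v, where k is the depth of the spanning tree. -/

import Mathlib

structure DirectedGraph where
  V : Type
  E : Type
  src : E → V
  rng : E → V

namespace DirectedGraph

/-- Two edges are composable (as in `e₂ e₁`, `e₂` after `e₁`) when `s(e₂) = r(e₁)`. -/
def Composable (G : DirectedGraph) (a b : G.E) : Prop := G.src a = G.rng b

/-- A list `[eₙ, …, e₁]` of edges is a path when consecutive edges are composable. -/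
def IsPathList (G : DirectedGraph) (μ : List G.E) : Prop := List.Chain' G.Composable μ

/-- The path `μ` has source `v` (vacuous for the empty path). -/
def SrcIs (G : DirectedGraph) (μ : List G.E) (v : G.V) : Prop :=
  ∀ e ∈ μ.getLast?, G.src e = v

/-- The path `μ`, regarded as a path with source `v`, has range `w`. -/
def RngIs (G : DirectedGraph) (v : G.V) (μ : List G.E) (w : G.V) : Prop :=
  match μ with
  | [] => v = w
  | e :: _ => G.rng e = w

/-- `μ` is a path with source `v`. -/
def IsPathAt (G : DirectedGraph) (v : G.V) (μ : List G.E) : Prop :=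
  G.IsPathList μ ∧ G.SrcIs μ v

/-- `μ` is a cycle at `v` : a path with source and range `v`. -/
def IsCycleAt (G : DirectedGraph) (v : G.V) (μ : List G.E) : Prop :=
  G.IsPathAt v μ ∧ G.RngIs v μ v

end DirectedGraph

/-- A colour word `γ` is synchronizing for the vertex `v`: every vertex `w` is
reached from `v` by a path whose colour word is `γ`. -/
def Synchronizing (G : DirectedGraph) {d : ℕ} (c : G.E → Fin d)
    (γ : List (Fin d)) (v : G.V) : Prop :=
  ∀ w : G.V, ∃ μ : List G.E, G.IsPathAt v μ ∧ G.RngIs v μ w ∧ μ.map c = γ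

/-- The list of edges obtained by following `f` backwards `n` times from `w`. -/
def chainList (G : DirectedGraph) (f : G.V → G.E) : ℕ → G.V → List G.E
  | 0, _ => []
  | n+1, w => f w :: chainList G f n (G.src (f w))

/-- Let `G` be a finite, transitive, in-degree `d`-regular
directed graph containing a loop `e₀` at a vertex.  Then `G` admits a strong edge
colouring with `d` colours together with a synchronizing word for that vertex,
and the word may be taken constant (of the form `jᵏ`, the colour of the loop and
of a directed spanning tree). -/
theorem stmt17 (G : DirectedGraph) [Fintype G.V] [Fintype G.E] {d : ℕ}
    (htrans : ∀ v w : G.V, ∃ μ : List G.E, G.IsPathAt v μ ∧ G.RngIs v μ w)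
    (hreg : ∀ v : G.V, Nat.card {e : G.E // G.rng e = v} = d)
    (e₀ : G.E) (hloop : G.src e₀ = G.rng e₀) :
    ∃ c : G.E → Fin d,
      (∀ (v : G.V) (j : Fin d), ∃! e : G.E, G.rng e = v ∧ c e = j) ∧
      ∃ (j : Fin d) (k : ℕ),
        Synchronizing G c (List.replicate k j) (G.src e₀) := by
  classical
  set v := G.src e₀ with hv
  have hrng₀ : G.rng e₀ = v := hloop.symm
  -- distance from v
  have hP : ∀ w : G.V, ∃ n : ℕ, ∃ μ : List G.E,
      G.IsPathAt v μ ∧ G.RngIs v μ w ∧ μ.length = n := by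
    intro w
    obtain ⟨μ, h1, h2⟩ := htrans v w
    exact ⟨μ.length, μ, h1, h2, rfl⟩
  set dist : G.V → ℕ := fun w => Nat.find (hP w) with hdist
  have hdist_v : dist v = 0 := by
    simp only [hdist]
    rw [Nat.find_eq_zero]
    exact ⟨[], ⟨List.isChain_nil, by intro e he; simp at he⟩, rfl, rfl⟩
  have hdist_zero : ∀ w, dist w = 0 → w = v := by
    intro w h
    obtain ⟨μ, h1, h2, h3⟩ := Nat.find_spec (hP w)
    simp only [hdist] at h
    have h3' : μ.length = 0 := h3.trans h
    rw [List.length_eq_zero_iff] at h3'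
    subst h3'
    exact h2.symm
  -- edge selection (tree edges + loop at v)
  have hB : ∀ w : G.V, ∃ e : G.E, G.rng e = w ∧
      (w ≠ v → dist (G.src e) < dist w) ∧ (w = v → e = e₀) := by
    intro w
    by_cases hw : w = v
    · exact ⟨e₀, by rw [hw, hrng₀], fun h => absurd hw h, fun _ => rfl⟩
    · have hne : dist w ≠ 0 := fun h => hw (hdist_zero w h)
      obtain ⟨m, hm⟩ : ∃ m, dist w = m + 1 := ⟨dist w - 1, (Nat.succ_pred_eq_of_ne_zero hne).symm⟩
      obtain ⟨μ, ⟨hch, hsrc⟩, hrng, hlen⟩ := Nat.find_spec (hP w)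
      have hm' : Nat.find (hP w) = m + 1 := by simpa only [hdist] using hm
      have hlen : μ.length = m + 1 := hlen.trans hm'
      obtain ⟨e, μ', rfl⟩ : ∃ e μ', μ = e :: μ' := by
        cases μ with
        | nil => simp at hlen
        | cons a l => exact ⟨a, l, rfl⟩
      refine ⟨e, hrng, fun _ => ?_, fun h => absurd h hw⟩
      have hpath' : G.IsPathAt v μ' ∧ G.RngIs v μ' (G.src e) := by
        constructor
        · refine ⟨hch.tail, ?_⟩
          cases μ' with
          | nil => intro e' he'; simp at he'
          | cons b l =>
            intro e' he'
            exact hsrc e' (by rwa [List.getLast?_cons_cons])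
        · cases μ' with
          | nil =>
            have := hsrc e (by simp)
            exact this.symm
          | cons b l =>
            have := List.isChain_cons_cons.mp hch
            exact this.1.symm
      have hle : dist (G.src e) ≤ m := by
        simp only [hdist]
        apply Nat.find_le
        exact ⟨μ', hpath'.1, hpath'.2, by simpa using hlen⟩
      omega
  choose f hf1 hf2 hf3 using hB
  set g : G.V → G.V := fun w => G.src (f w) with hg
  have hgv : g v = v := by
    simp only [hg]
    rw [hf3 v rfl, ← hv]
  have hiter : ∀ n w, dist w ≤ n → g^[n] w = v := by
    intro n
    induction n with
    | zero =>
      intro w h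
      exact hdist_zero w (Nat.le_zero.mp h)
    | succ n ih =>
      intro w h
      by_cases hw : w = v
      · subst hw
        rw [Function.iterate_succ_apply, hgv]
        exact ih v (by rw [hdist_v]; omega)
      · have : dist (g w) < dist w := hf2 w hw
        rw [Function.iterate_succ_apply]
        exact ih (g w) (by omega)
  -- positivity of d
  have hd : 0 < d := by
    rw [← hreg v]
    have : Nonempty {e : G.E // G.rng e = v} := ⟨⟨e₀, hrng₀⟩⟩
    exact Nat.card_pos
  -- colouring
  have hσ : ∀ w : G.V, ∃ σ : {e : G.E // G.rng e = w} ≃ Fin d,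
      σ ⟨f w, hf1 w⟩ = ⟨0, hd⟩ := by
    intro w
    have : Fintype {e : G.E // G.rng e = w} := Fintype.ofFinite _
    have hc : Fintype.card {e : G.E // G.rng e = w} = d := by
      rw [← Nat.card_eq_fintype_card]; exact hreg w
    let eqv := Fintype.equivFinOfCardEq hc
    refine ⟨eqv.trans (Equiv.swap (eqv ⟨f w, hf1 w⟩) ⟨0, hd⟩), ?_⟩
    simp [eqv]
  choose σ hσ0 using hσ
  set c : G.E → Fin d := fun e => σ (G.rng e) ⟨e, rfl⟩ with hcdef
  have hc_eq : ∀ (e : G.E) (w : G.V) (h : G.rng e = w), c e = σ w ⟨e, h⟩ := by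
    intro e w h
    subst h
    rfl
  have hcf : ∀ u : G.V, c (f u) = ⟨0, hd⟩ := by
    intro u
    rw [hc_eq (f u) u (hf1 u)]
    exact hσ0 u
  refine ⟨c, ?_, ⟨0, hd⟩, Finset.univ.sup dist, ?_⟩
  · -- strong edge colouring
    intro w j
    refine ⟨((σ w).symm j).val, ⟨((σ w).symm j).prop, ?_⟩, ?_⟩
    · rw [hc_eq _ w ((σ w).symm j).prop]
      simp
    · rintro e ⟨h1, h2⟩
      rw [hc_eq e w h1] at h2
      have : (⟨e, h1⟩ : {e : G.E // G.rng e = w}) = (σ w).symm j := by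
        rw [← h2]; simp
      exact congrArg Subtype.val this
  · -- synchronizing
    intro w
    set k := Finset.univ.sup dist with hk
    have hkw : ∀ u : G.V, dist u ≤ k := fun u => Finset.le_sup (Finset.mem_univ u)
    refine ⟨chainList G f k w, ⟨?_, ?_⟩, ?_, ?_⟩
    · -- IsPathList
      have : ∀ n u, G.IsPathList (chainList G f n u) := by
        intro n
        induction n with
        | zero => intro u; exact List.isChain_nil
        | succ n ih =>
          intro u
          cases n with
          | zero => exact List.isChain_singleton _
          | succ m =>
            show List.Chain' G.Composable (f u :: f (g u) :: chainList G f m (g (g u)))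
            exact List.isChain_cons_cons.mpr ⟨(hf1 (g u)).symm, ih (g u)⟩
      exact this k w
    · -- SrcIs
      have hlast : ∀ n u, (chainList G f (n+1) u).getLast? = some (f (g^[n] u)) := by
        intro n
        induction n with
        | zero => intro u; rfl
        | succ n ih =>
          intro u
          show (f u :: chainList G f (n+1) (g u)).getLast? = _
          have : chainList G f (n+1) (g u) = f (g u) :: chainList G f n (g (g u)) := rfl
          rw [this, List.getLast?_cons_cons, ← this, ih (g u),
            ← Function.iterate_succ_apply]
      cases hk0 : k with
      | zero =>
        intro e' he'
        simp [chainList] at he'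
      | succ m =>
        intro e' he'
        rw [hlast m w] at he'
        simp only [Option.mem_def, Option.some.injEq] at he'
        subst he'
        show g (g^[m] w) = v
        have hit := hiter k w (hkw w)
        rw [hk0, Function.iterate_succ_apply'] at hit
        exact hit
    · -- RngIs
      cases hk0 : k with
      | zero =>
        have : dist w = 0 := by have := hkw w; omega
        exact (hdist_zero w this).symm
      | succ m =>
        show G.rng (f w) = w
        exact hf1 w
    · -- colour word
      have : ∀ n u, (chainList G f n u).map c = List.replicate n ⟨0, hd⟩ := by
        intro n
        induction n with
        | zero => intro u; rfl
        | succ n ih =>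
          intro u
          show c (f u) :: (chainList G f n (g u)).map c = _
          rw [hcf u, ih (g u), List.replicate_succ]
      exact this k w
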